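/- Let B be a Garside shadow in (W,S), let g ∈ W and s ∈ S with ℓ(gs) < ℓ(g). Then ν_B(g) ⪯ gs ⪯ g. -/

import Mathlib

open CoxeterSystem

variable {ι W : Type} [Group W] {cm : CoxeterMatrix ι}

/-- The right weak order on `W`: `g ⪯ h` iff `ℓ(g) + ℓ(g⁻¹h) = ℓ(h)`. -/
def WLe (cs : CoxeterSystem cm W) (g h : W) : Prop :=
  cs.length g + cs.length (g⁻¹ * h) = cs.length h

/-- `w` is a suffix of `g` if `g = u * w` with `ℓ(g) = ℓ(u) + ℓ(w)`. -/
def IsSuffixOf (cs : CoxeterSystem cm W) (w g : W) : Prop :=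
  ∃ u : W, g = u * w ∧ cs.length g = cs.length u + cs.length w

/-- `j` is the join (least upper bound) of `X` with respect to the right weak order. -/
def IsJoin (cs : CoxeterSystem cm W) (X : Set W) (j : W) : Prop :=
  (∀ x ∈ X, WLe cs x j) ∧ ∀ u : W, (∀ x ∈ X, WLe cs x u) → WLe cs j u

/-- A Garside shadow: a subset of `W` containing all simple reflections, closed under
existing joins and under taking suffixes. -/
def IsGarsideShadow (cs : CoxeterSystem cm W) (B : Set W) : Prop :=
  (∀ i : ι, cs.simple i ∈ B) ∧
  (∀ X : Set W, X ⊆ B → ∀ j : W, IsJoin cs X j → j ∈ B) ∧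
  (∀ b ∈ B, ∀ w : W, IsSuffixOf cs w b → w ∈ B)

/-- `π` is the `B`-projection: `π g` is the join of `{b ∈ B : b ⪯ g}` and lies in `B`. -/
def IsGarsideProjection (cs : CoxeterSystem cm W) (B : Set W) (π : W → W) : Prop :=
  ∀ g : W, π g ∈ B ∧ IsJoin cs {b : W | b ∈ B ∧ WLe cs b g} (π g)

/-- The voracious projection with respect to `π = π_B`: `ν_B(g) = g · π_B(g⁻¹)`. -/
def vor (π : W → W) (g : W) : W := g * π g⁻¹

/-- The language `L_g`, defined inductively: `L_id = {ε}` and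
`L_g = {uv : u ∈ L_{ν_B(g)}, v a minimal length word representing ν_B(g)⁻¹g}`. -/
inductive VorL (cs : CoxeterSystem cm W) (π : W → W) : W → List ι → Prop
  | nil : VorL cs π 1 []
  | step {g : W} {u v : List ι} (hg : g ≠ 1) (hu : VorL cs π (vor π g) u)
      (hv : cs.wordProd v = (vor π g)⁻¹ * g)
      (hmin : v.length = cs.length ((vor π g)⁻¹ * g)) :
      VorL cs π g (u ++ v)

/-- The voracious language `V_B = ⋃_{g ∈ W} L_g`. -/
def VorLang (cs : CoxeterSystem cm W) (π : W → W) : Language ι :=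
  {v : List ι | ∃ g : W, VorL cs π g v}

/-- The reflection `r` separates `g` from `h`. -/
def SepElem (cs : CoxeterSystem cm W) (r g h : W) : Prop :=
  Xor' (cs.length (r * g) < cs.length g) (cs.length (r * h) < cs.length h)

/-- The reflection `r'` separates `g` from the wall of the reflection `r`. -/
def SepWall (cs : CoxeterSystem cm W) (r' g r : W) : Prop :=
  ∀ h : W, (∃ i : ι, r * h = h * cs.simple i) → SepElem cs r' g h

/-- The wall of the reflection `r` is `m`-close to `g`: at most `m` reflections
separate `g` from the wall of `r`. -/
def MClose (cs : CoxeterSystem cm W) (m : ℕ) (g r : W) : Prop :=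
  ∃ F : Finset W, F.card ≤ m ∧
    ∀ r' : W, cs.IsReflection r' → SepWall cs r' g r → r' ∈ F


/-- If `ℓ(gs) < ℓ(g)` for `s ∈ S`, then `ν_B(g) ⪯ gs ⪯ g`. -/
theorem vor_le_of_descent [Finite ι] (cs : CoxeterSystem cm W)
    (B : Set W) (hB : IsGarsideShadow cs B)
    (piB : W → W) (hpi : IsGarsideProjection cs B piB)
    (g : W) (s : ι) (hs : cs.length (g * cs.simple s) < cs.length g) :
    WLe cs (vor piB g) (g * cs.simple s) ∧ WLe cs (g * cs.simple s) g := by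
  have hgs : cs.length (g * cs.simple s) + 1 = cs.length g := by
    rcases cs.length_mul_simple g s with h | h <;> omega
  have hsg : WLe cs (cs.simple s) g⁻¹ := by
    unfold WLe
    rw [cs.inv_simple, cs.length_simple,
      show cs.simple s * g⁻¹ = (g * cs.simple s)⁻¹ by simp [cs.inv_simple],
      cs.length_inv, cs.length_inv]
    omega
  set p := piB g⁻¹ with hp
  have hjoin := (hpi g⁻¹).2
  have hsp : WLe cs (cs.simple s) p := hjoin.1 _ ⟨hB.1 s, hsg⟩
  have hpg : WLe cs p g⁻¹ := hjoin.2 g⁻¹ (fun x hx => hx.2)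
  unfold WLe at hsp hpg ⊢
  rw [cs.inv_simple, cs.length_simple] at hsp
  constructor
  · have e1 : (vor piB g)⁻¹ * (g * cs.simple s) = p⁻¹ * cs.simple s := by
      simp [vor, mul_assoc, hp]
    have e2 : cs.length (vor piB g) = cs.length (p⁻¹ * g⁻¹) := by
      rw [show vor piB g = (p⁻¹ * g⁻¹)⁻¹ by simp [vor, hp], cs.length_inv]
    have e3 : cs.length (p⁻¹ * cs.simple s) = cs.length (cs.simple s * p) := by
      rw [show p⁻¹ * cs.simple s = (cs.simple s * p)⁻¹ by simp [cs.inv_simple],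
        cs.length_inv]
    rw [e1, e2, e3]
    rw [cs.length_inv] at hpg
    omega
  · rw [show (g * cs.simple s)⁻¹ * g = cs.simple s by simp [cs.inv_simple],
      cs.length_simple]
    omega
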